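/- For complex numbers x, y, z with |x| < 1, |y| < 1, |z| < 1: ∑ over triples (a,b,c) with a,b ≥ 0, c ≥ 1, gcd(a,b,c) = 1 of (1/c)·log(1 − x^a y^b z^c) equals log(1−z)/((1−x)(1−y)). -/

import Mathlib

open Complex

private lemma vpv_gcd_div {k m n : ℕ} (hk : k ≠ 0) (hm : k ∣ m) (hn : k ∣ n) :
    Nat.gcd (m / k) (n / k) = Nat.gcd m n / k := by
  obtain ⟨m', rfl⟩ := hm
  obtain ⟨n', rfl⟩ := hn
  have hk' : 0 < k := Nat.pos_of_ne_zero hk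
  rw [Nat.gcd_mul_left, Nat.mul_div_cancel_left _ hk', Nat.mul_div_cancel_left _ hk',
    Nat.mul_div_cancel_left _ hk']

/-- The multiplication-by-gcd equivalence between (coprime triple, n) pairs and
all triples with positive last coordinate. -/
noncomputable def vpvTripleEquiv :
    ({p : ℕ × ℕ × ℕ // 0 < p.2.2 ∧ Nat.gcd p.1 (Nat.gcd p.2.1 p.2.2) = 1} × ℕ+) ≃
      {q : ℕ × ℕ × ℕ // 0 < q.2.2} := by
  refine Equiv.ofBijective
    (fun pn => ⟨((pn.2 : ℕ) * pn.1.1.1, (pn.2 : ℕ) * pn.1.1.2.1, (pn.2 : ℕ) * pn.1.1.2.2),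
      Nat.mul_pos pn.2.pos pn.1.2.1⟩) ⟨?_, ?_⟩
  · rintro ⟨⟨⟨a, b, c⟩, hc, hg⟩, n⟩ ⟨⟨⟨a', b', c'⟩, hc', hg'⟩, n'⟩ h
    simp only [Subtype.mk.injEq, Prod.mk.injEq] at h
    obtain ⟨h1, h2, h3⟩ := h
    have hn : (n : ℕ) = (n' : ℕ) := by
      have e1 : Nat.gcd ((n : ℕ) * a) (Nat.gcd ((n : ℕ) * b) ((n : ℕ) * c)) = (n : ℕ) := by
        rw [Nat.gcd_mul_left, Nat.gcd_mul_left, hg, Nat.mul_one]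
      have e2 : Nat.gcd ((n' : ℕ) * a') (Nat.gcd ((n' : ℕ) * b') ((n' : ℕ) * c')) = (n' : ℕ) := by
        rw [Nat.gcd_mul_left, Nat.gcd_mul_left, hg', Nat.mul_one]
      rw [← e1, h1, h2, h3, e2]
    have hnpos : 0 < (n : ℕ) := n.pos
    rw [hn] at h1 h2 h3
    have hn'pos : 0 < (n' : ℕ) := n'.pos
    have ha : a = a' := Nat.eq_of_mul_eq_mul_left hn'pos h1
    have hb : b = b' := Nat.eq_of_mul_eq_mul_left hn'pos h2
    have hcc : c = c' := Nat.eq_of_mul_eq_mul_left hn'pos h3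
    subst ha; subst hb; subst hcc
    refine Prod.ext (Subtype.ext rfl) (PNat.coe_injective hn)
  · rintro ⟨⟨A, B, C⟩, hC⟩
    set g := Nat.gcd A (Nat.gcd B C) with hgdef
    have hBC : g ∣ Nat.gcd B C := Nat.gcd_dvd_right _ _
    have hA : g ∣ A := Nat.gcd_dvd_left _ _
    have hB : g ∣ B := hBC.trans (Nat.gcd_dvd_left _ _)
    have hCd : g ∣ C := hBC.trans (Nat.gcd_dvd_right _ _)
    have hg0 : g ≠ 0 := by
      intro h
      have hC0 : C = 0 := Nat.eq_zero_of_zero_dvd (h ▸ hCd)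
      have hC' : 0 < C := hC
      omega
    have hgpos : 0 < g := Nat.pos_of_ne_zero hg0
    refine ⟨⟨⟨⟨A / g, B / g, C / g⟩, ?_, ?_⟩, ⟨g, hgpos⟩⟩, ?_⟩
    · exact Nat.div_pos (Nat.le_of_dvd hC hCd) hgpos
    · rw [vpv_gcd_div hg0 hB hCd, vpv_gcd_div hg0 hA hBC, ← hgdef, Nat.div_self hgpos]
    · refine Subtype.ext ?_
      show ((g * (A / g), g * (B / g), g * (C / g)) : ℕ × ℕ × ℕ) = (A, B, C)
      rw [Nat.mul_div_cancel' hA, Nat.mul_div_cancel' hB, Nat.mul_div_cancel' hCd]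

private lemma vpv_mul_arith (u v t M C : ℂ) :
    u * (v * -(t / (M * C))) = -(1 / C) * (u * v * t / M) := by
  rw [div_eq_mul_inv, div_eq_mul_inv, mul_inv]
  ring

set_option maxHeartbeats 1000000 in
theorem vpv_three_dim_log_identity (x y z : ℂ) (hx : ‖x‖ < 1)
    (hy : ‖y‖ < 1) (hz : ‖z‖ < 1) :
    ∑' p : {p : ℕ × ℕ × ℕ // 0 < p.2.2 ∧ Nat.gcd p.1 (Nat.gcd p.2.1 p.2.2) = 1},
        (1 / ((p : ℕ × ℕ × ℕ).2.2 : ℂ)) *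
          Complex.log (1 - x ^ (p : ℕ × ℕ × ℕ).1 * y ^ (p : ℕ × ℕ × ℕ).2.1 *
            z ^ (p : ℕ × ℕ × ℕ).2.2) =
      Complex.log (1 - z) / ((1 - x) * (1 - y)) := by
  have hx' : ‖x‖ < 1 := by exact hx
  have hy' : ‖y‖ < 1 := by exact hy
  have hz' : ‖z‖ < 1 := by exact hz
  set L : ℂ := Complex.log (1 - z) with hL
  set h : ℕ → ℂ := fun c => -(z ^ c / (c : ℂ)) with hh_def
  have hh0 : h 0 = 0 := by simp [hh_def]
  have hh : HasSum h L := by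
    have := (Complex.hasSum_taylorSeries_neg_log hz').neg
    simpa [hh_def] using this
  have hhle : ∀ c : ℕ, ‖h c‖ ≤ ‖z‖ ^ c := by
    intro c
    rcases c with _ | c
    · simp [hh_def]
    · rw [hh_def]
      simp only [norm_neg, norm_div, norm_pow, Complex.norm_natCast]
      exact div_le_self (pow_nonneg (norm_nonneg _) _) (by exact_mod_cast Nat.one_le_iff_ne_zero.mpr (Nat.succ_ne_zero c))
  -- geometric sums
  have hgx : HasSum (fun a : ℕ => x ^ a) (1 - x)⁻¹ := hasSum_geometric_of_norm_lt_one hx'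
  have hgy : HasSum (fun b : ℕ => y ^ b) (1 - y)⁻¹ := hasSum_geometric_of_norm_lt_one hy'
  -- norm summabilities
  have hsy : Summable (fun b : ℕ => ‖y‖ ^ b) := summable_geometric_of_lt_one (norm_nonneg _) hy'
  have hsz : Summable (fun c : ℕ => ‖z‖ ^ c) := summable_geometric_of_lt_one (norm_nonneg _) hz'
  have hsx : Summable (fun a : ℕ => ‖x‖ ^ a) := summable_geometric_of_lt_one (norm_nonneg _) hx'
  have hyz : Summable (fun r : ℕ × ℕ => ‖y‖ ^ r.1 * ‖z‖ ^ r.2) :=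
    hsy.mul_of_nonneg hsz (fun _ => pow_nonneg (norm_nonneg _) _)
      (fun _ => pow_nonneg (norm_nonneg _) _)
  have hnorm : Summable (fun q : ℕ × ℕ × ℕ => ‖x‖ ^ q.1 * (‖y‖ ^ q.2.1 * ‖z‖ ^ q.2.2)) :=
    hsx.mul_of_nonneg hyz (fun _ => pow_nonneg (norm_nonneg _) _)
      (fun r => mul_nonneg (pow_nonneg (norm_nonneg _) _) (pow_nonneg (norm_nonneg _) _))
  have hinner : Summable (fun r : ℕ × ℕ => y ^ r.1 * h r.2) := by
    refine Summable.of_norm_bounded hyz ?_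
    intro r
    rw [norm_mul, norm_pow]
    exact mul_le_mul_of_nonneg_left (hhle r.2) (pow_nonneg (norm_nonneg _) _)
  have hFs : Summable (fun q : ℕ × ℕ × ℕ => x ^ q.1 * (y ^ q.2.1 * h q.2.2)) := by
    refine Summable.of_norm_bounded hnorm ?_
    intro q
    simp only [norm_mul, norm_pow]
    refine mul_le_mul_of_nonneg_left ?_ (pow_nonneg (norm_nonneg _) _)
    exact mul_le_mul_of_nonneg_left (hhle q.2.2) (pow_nonneg (norm_nonneg _) _)
  have hinnerSum : HasSum (fun r : ℕ × ℕ => y ^ r.1 * h r.2) ((1 - y)⁻¹ * L) :=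
    hgy.mul hh hinner
  have hFsum : HasSum (fun q : ℕ × ℕ × ℕ => x ^ q.1 * (y ^ q.2.1 * h q.2.2)) ((1 - x)⁻¹ * ((1 - y)⁻¹ * L)) := by
    have H := HasSum.mul hgx hinnerSum (by exact hFs)
    exact H
  have hT : (1 - x)⁻¹ * ((1 - y)⁻¹ * L) = L / ((1 - x) * (1 - y)) := by
    rw [div_eq_mul_inv, mul_inv]; ring
  rw [hT] at hFsum
  set T : ℂ := L / ((1 - x) * (1 - y))
  -- restrict to positive last coordinate
  have hsupp : Function.support (fun q : ℕ × ℕ × ℕ => x ^ q.1 * (y ^ q.2.1 * h q.2.2)) ⊆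
      {q : ℕ × ℕ × ℕ | 0 < q.2.2} := by
    intro q hq
    by_contra hq'
    have hc0 : q.2.2 = 0 := by simpa using hq'
    apply hq
    simp [hc0, hh0]
  have hGS : HasSum (fun q : {q : ℕ × ℕ × ℕ | 0 < q.2.2} =>
      x ^ (q : ℕ × ℕ × ℕ).1 * (y ^ (q : ℕ × ℕ × ℕ).2.1 * h (q : ℕ × ℕ × ℕ).2.2)) T :=
    (hasSum_subtype_iff_of_support_subset hsupp).mpr hFsum
  -- transport through the equivalence
  have hPE : HasSum (fun pn : {p : ℕ × ℕ × ℕ // 0 < p.2.2 ∧ Nat.gcd p.1 (Nat.gcd p.2.1 p.2.2) = 1} × ℕ+ =>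
      x ^ ((vpvTripleEquiv pn) : ℕ × ℕ × ℕ).1 * (y ^ ((vpvTripleEquiv pn) : ℕ × ℕ × ℕ).2.1 *
        h ((vpvTripleEquiv pn) : ℕ × ℕ × ℕ).2.2)) T :=
    (Equiv.hasSum_iff vpvTripleEquiv).mpr hGS
  -- fiberwise sums
  have hfib : ∀ p : {p : ℕ × ℕ × ℕ // 0 < p.2.2 ∧ Nat.gcd p.1 (Nat.gcd p.2.1 p.2.2) = 1},
      HasSum (fun n : ℕ+ => x ^ ((vpvTripleEquiv (p, n)) : ℕ × ℕ × ℕ).1 *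
        (y ^ ((vpvTripleEquiv (p, n)) : ℕ × ℕ × ℕ).2.1 * h ((vpvTripleEquiv (p, n)) : ℕ × ℕ × ℕ).2.2))
        ((1 / ((p : ℕ × ℕ × ℕ).2.2 : ℂ)) *
          Complex.log (1 - x ^ (p : ℕ × ℕ × ℕ).1 * y ^ (p : ℕ × ℕ × ℕ).2.1 *
            z ^ (p : ℕ × ℕ × ℕ).2.2)) := by
    rintro ⟨⟨a, b, c⟩, hc, hg⟩
    set w : ℂ := x ^ a * y ^ b * z ^ c with hw_def
    have hw : ‖w‖ < 1 := by
      have h1 : ‖x‖ ^ a ≤ 1 := pow_le_one₀ (norm_nonneg _) hx'.le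
      have h2 : ‖y‖ ^ b ≤ 1 := pow_le_one₀ (norm_nonneg _) hy'.le
      have h3 : ‖z‖ ^ c ≤ ‖z‖ := pow_le_of_le_one (norm_nonneg _) hz'.le hc.ne'
      have : ‖w‖ = ‖x‖ ^ a * ‖y‖ ^ b * ‖z‖ ^ c := by
        rw [hw_def, norm_mul, norm_mul, norm_pow, norm_pow, norm_pow]
      rw [this]
      calc ‖x‖ ^ a * ‖y‖ ^ b * ‖z‖ ^ c ≤ 1 * 1 * ‖z‖ := by
            exact mul_le_mul (mul_le_mul h1 h2 (pow_nonneg (norm_nonneg _) _) zero_le_one) h3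
              (pow_nonneg (norm_nonneg _) _) (by norm_num)
        _ = ‖z‖ := by ring
        _ < 1 := hz'
    have H0 : HasSum (fun n : ℕ => w ^ n / n) (-Complex.log (1 - w)) :=
      Complex.hasSum_taylorSeries_neg_log hw
    have H1 : HasSum (fun n : ℕ => -(1 / (c : ℂ)) * (w ^ n / n))
        ((1 / (c : ℂ)) * Complex.log (1 - w)) := by
      have := H0.mul_left (-(1 / (c : ℂ)))
      simpa [neg_mul_neg] using this
    have H2 : HasSum (fun n : ℕ => -(1 / (c : ℂ)) * (w ^ (n + 1) / (n + 1 : ℕ)))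
        ((1 / (c : ℂ)) * Complex.log (1 - w)) := by
      refine (hasSum_nat_add_iff (f := fun n : ℕ => -(1 / (c : ℂ)) * (w ^ n / (n : ℕ))) 1).mpr ?_
      simpa using H1
    -- identify the fiber function
    have key : ∀ m : ℕ+, x ^ ((vpvTripleEquiv (⟨(a, b, c), hc, hg⟩, m)) : ℕ × ℕ × ℕ).1 *
        (y ^ ((vpvTripleEquiv (⟨(a, b, c), hc, hg⟩, m)) : ℕ × ℕ × ℕ).2.1 *
          h ((vpvTripleEquiv (⟨(a, b, c), hc, hg⟩, m)) : ℕ × ℕ × ℕ).2.2) =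
        -(1 / (c : ℂ)) * (w ^ (m : ℕ) / ((m : ℕ) : ℂ)) := by
      intro m
      show x ^ ((m : ℕ) * a) * (y ^ ((m : ℕ) * b) *
        -(z ^ ((m : ℕ) * c) / (((m : ℕ) * c : ℕ) : ℂ))) = _
      rw [pow_mul', pow_mul', pow_mul', Nat.cast_mul, hw_def, mul_pow, mul_pow]
      exact vpv_mul_arith _ _ _ _ _
    have He : HasSum (fun n : ℕ+ => x ^ ((vpvTripleEquiv (⟨(a, b, c), hc, hg⟩, n)) : ℕ × ℕ × ℕ).1 *
        (y ^ ((vpvTripleEquiv (⟨(a, b, c), hc, hg⟩, n)) : ℕ × ℕ × ℕ).2.1 *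
          h ((vpvTripleEquiv (⟨(a, b, c), hc, hg⟩, n)) : ℕ × ℕ × ℕ).2.2))
        ((1 / (c : ℂ)) * Complex.log (1 - w)) := by
      refine (Equiv.hasSum_iff (Equiv.pnatEquivNat.symm)).mp ?_
      have : (fun n : ℕ+ => x ^ ((vpvTripleEquiv (⟨(a, b, c), hc, hg⟩, n)) : ℕ × ℕ × ℕ).1 *
          (y ^ ((vpvTripleEquiv (⟨(a, b, c), hc, hg⟩, n)) : ℕ × ℕ × ℕ).2.1 *
            h ((vpvTripleEquiv (⟨(a, b, c), hc, hg⟩, n)) : ℕ × ℕ × ℕ).2.2)) ∘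
          Equiv.pnatEquivNat.symm =
          fun n : ℕ => -(1 / (c : ℂ)) * (w ^ (n + 1) / (n + 1 : ℕ)) := by
        funext n
        simp only [Function.comp_apply]
        rw [key]
        norm_num [Equiv.pnatEquivNat, Nat.succPNat]
      rw [this]
      exact H2
    exact He
  exact (hPE.prod_fiberwise hfib).tsum_eq
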